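/- Let B, A ∈ ℝ^{N×N} be matrices sharing the same support, with ‖[B]_i‖ ≤ 1 for every column i, where the support of column i of B is contained in a parent set Pa(i) of size at most d. Let Δ = A − B, and suppose for each i ∈ [N] there is a symmetric matrix M_i ⪰ I such that ‖[Δ]_i‖_{M_i} ≤ β. Then for each ℓ ≥ 1, every column of A^ℓ − B^ℓ satisfies ‖[A^ℓ − B^ℓ]_i‖ < d^{(ℓ−1)/2}·(β+1)^ℓ · max_{j∈[N]} λ_min(M_j)^{−1/2}. -/

import Mathlib

open Matrix

noncomputable def euclNorm {n : ℕ} (x : Fin n → ℝ) : ℝ := Real.sqrt (∑ i, (x i) ^ 2)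

/-- Smallest eigenvalue of a symmetric matrix, as the infimum of the quadratic form on the
unit sphere. -/
noncomputable def qfInf {n : ℕ} (M : Matrix (Fin n) (Fin n) ℝ) : ℝ :=
  sInf {r : ℝ | ∃ x : Fin n → ℝ, euclNorm x = 1 ∧ r = x ⬝ᵥ M.mulVec x}

namespace Stmt11Aux

lemma euclNorm_nonneg {n : ℕ} (x : Fin n → ℝ) : 0 ≤ euclNorm x := Real.sqrt_nonneg _

lemma euclNorm_sq {n : ℕ} (x : Fin n → ℝ) : euclNorm x ^ 2 = ∑ i, (x i) ^ 2 :=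
  Real.sq_sqrt (by positivity)

lemma euclNorm_smul {n : ℕ} (c : ℝ) (x : Fin n → ℝ) :
    euclNorm (fun j => c * x j) = |c| * euclNorm x := by
  unfold euclNorm
  rw [← Real.sqrt_sq_eq_abs, ← Real.sqrt_mul (sq_nonneg c), Finset.mul_sum]
  congr 1
  exact Finset.sum_congr rfl fun i _ => by ring

lemma euclNorm_add_le {n : ℕ} (x y : Fin n → ℝ) :
    euclNorm (fun j => x j + y j) ≤ euclNorm x + euclNorm y := by
  have h := norm_add_le (E := EuclideanSpace ℝ (Fin n))
    ((WithLp.equiv 2 (Fin n → ℝ)).symm x) ((WithLp.equiv 2 (Fin n → ℝ)).symm y)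
  have e : ∀ z : Fin n → ℝ, ‖(WithLp.equiv 2 (Fin n → ℝ)).symm z‖ = euclNorm z := by
    intro z
    rw [EuclideanSpace.norm_eq]
    unfold euclNorm
    congr 1
    exact Finset.sum_congr rfl fun i _ => by simp [sq_abs]
  have hxy : (WithLp.equiv 2 (Fin n → ℝ)).symm x + (WithLp.equiv 2 (Fin n → ℝ)).symm y
      = (WithLp.equiv 2 (Fin n → ℝ)).symm (fun j => x j + y j) := rfl
  rw [hxy, e, e, e] at h
  exact h

lemma euclNorm_sum_le {n : ℕ} {α : Type*} (s : Finset α) (f : α → Fin n → ℝ) :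
    euclNorm (fun j => ∑ k ∈ s, f k j) ≤ ∑ k ∈ s, euclNorm (f k) := by
  classical
  induction s using Finset.induction with
  | empty => simp [euclNorm]
  | insert a s h ih =>
    calc euclNorm (fun j => ∑ k ∈ insert a s, f k j)
        = euclNorm (fun j => f a j + ∑ k ∈ s, f k j) := by
          congr 1; funext j; rw [Finset.sum_insert h]
      _ ≤ euclNorm (f a) + euclNorm (fun j => ∑ k ∈ s, f k j) := euclNorm_add_le _ _
      _ ≤ euclNorm (f a) + ∑ k ∈ s, euclNorm (f k) := by linarith
      _ = ∑ k ∈ insert a s, euclNorm (f k) := by rw [Finset.sum_insert h]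

lemma sum_abs_le {n : ℕ} (s : Finset (Fin n)) (x : Fin n → ℝ) :
    ∑ k ∈ s, |x k| ≤ Real.sqrt s.card * euclNorm x := by
  have h1 : (∑ k ∈ s, |x k|) ^ 2 ≤ (s.card : ℝ) * ∑ k ∈ s, (x k) ^ 2 := by
    have := Finset.sum_mul_sq_le_sq_mul_sq s (fun _ => (1:ℝ)) (fun k => |x k|)
    simpa [sq_abs] using this
  have h2 : (∑ k ∈ s, (x k) ^ 2) ≤ ∑ k, (x k) ^ 2 :=
    Finset.sum_le_sum_of_subset_of_nonneg (Finset.subset_univ s) (fun _ _ _ => sq_nonneg _)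
  have h3 : (∑ k ∈ s, |x k|) ^ 2 ≤ (s.card : ℝ) * ∑ k, (x k) ^ 2 := by
    refine h1.trans (mul_le_mul_of_nonneg_left h2 (by positivity))
  have h4 : ∑ k ∈ s, |x k| = Real.sqrt ((∑ k ∈ s, |x k|) ^ 2) := by
    rw [Real.sqrt_sq (Finset.sum_nonneg fun _ _ => abs_nonneg _)]
  rw [h4]
  calc Real.sqrt ((∑ k ∈ s, |x k|) ^ 2) ≤ Real.sqrt ((s.card : ℝ) * ∑ k, (x k) ^ 2) :=
        Real.sqrt_le_sqrt h3
    _ = Real.sqrt s.card * euclNorm x := by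
        rw [Real.sqrt_mul (Nat.cast_nonneg s.card)]; rfl

/-- column of a product, bounded via a support set for the right column. -/
lemma ecol_mul_le {n : ℕ} (C X : Matrix (Fin n) (Fin n) ℝ) (i : Fin n) (s : Finset (Fin n))
    (hs : ∀ j, X j i ≠ 0 → j ∈ s) (a : ℝ) (ha : 0 ≤ a)
    (hC : ∀ j, euclNorm (fun k => C k j) ≤ a) :
    euclNorm (fun j => (C * X) j i) ≤ (∑ k ∈ s, |X k i|) * a := by
  classical
  have key : (fun j => (C * X) j i) = fun j => ∑ k ∈ s, X k i * C j k := by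
    funext j
    rw [Matrix.mul_apply]
    rw [← Finset.sum_subset (Finset.subset_univ s)]
    · exact Finset.sum_congr rfl fun k _ => mul_comm _ _
    · intro k _ hk
      have : X k i = 0 := by
        by_contra h; exact hk (hs k h)
      simp [this]
  rw [key]
  calc euclNorm (fun j => ∑ k ∈ s, X k i * C j k)
      ≤ ∑ k ∈ s, euclNorm (fun j => X k i * C j k) := euclNorm_sum_le s _
    _ ≤ ∑ k ∈ s, |X k i| * a := by
        refine Finset.sum_le_sum fun k _ => ?_
        rw [euclNorm_smul]
        exact mul_le_mul_of_nonneg_left (hC k) (abs_nonneg _)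
    _ = (∑ k ∈ s, |X k i|) * a := by rw [Finset.sum_mul]

lemma one_le_qfInf {n : ℕ} (hn : 0 < n) (M : Matrix (Fin n) (Fin n) ℝ)
    (hMI : (M - 1).PosSemidef) : 1 ≤ qfInf M := by
  have lb : ∀ r ∈ {r : ℝ | ∃ x : Fin n → ℝ, euclNorm x = 1 ∧ r = x ⬝ᵥ M.mulVec x}, 1 ≤ r := by
    rintro r ⟨x, hx1, rfl⟩
    have h0 : (0:ℝ) ≤ x ⬝ᵥ (M - 1).mulVec x := by
      have := hMI.dotProduct_mulVec_nonneg x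
      simpa using this
    rw [Matrix.sub_mulVec, Matrix.one_mulVec, dotProduct_sub] at h0
    have hxx : x ⬝ᵥ x = 1 := by
      have : x ⬝ᵥ x = ∑ i, (x i) ^ 2 := by
        simp [dotProduct, sq]
      rw [this, ← euclNorm_sq x, hx1]; norm_num
    linarith
  apply le_csInf
  · classical
    refine ⟨_, ⟨fun j => if j = (⟨0, hn⟩ : Fin n) then (1:ℝ) else 0, ?_, rfl⟩⟩
    unfold euclNorm
    have h1 : (∑ j, (if j = (⟨0, hn⟩ : Fin n) then (1:ℝ) else 0) ^ 2) = 1 := by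
      rw [Finset.sum_eq_single (⟨0, hn⟩ : Fin n)] <;> simp +contextual
    rw [h1, Real.sqrt_one]
  · exact lb

lemma bddBelow_qf {n : ℕ} (M : Matrix (Fin n) (Fin n) ℝ) (hMI : (M - 1).PosSemidef) :
    BddBelow {r : ℝ | ∃ x : Fin n → ℝ, euclNorm x = 1 ∧ r = x ⬝ᵥ M.mulVec x} := by
  refine ⟨1, ?_⟩
  rintro r ⟨x, hx1, rfl⟩
  have h0 : (0:ℝ) ≤ x ⬝ᵥ (M - 1).mulVec x := by simpa using hMI.dotProduct_mulVec_nonneg x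
  rw [Matrix.sub_mulVec, Matrix.one_mulVec, dotProduct_sub] at h0
  have hxx : x ⬝ᵥ x = 1 := by
    have : x ⬝ᵥ x = ∑ i, (x i) ^ 2 := by simp [dotProduct, sq]
    rw [this, ← euclNorm_sq x, hx1]; norm_num
  linarith

lemma euclNorm_le_qf {n : ℕ} (hn : 0 < n) (M : Matrix (Fin n) (Fin n) ℝ)
    (hMI : (M - 1).PosSemidef) (x : Fin n → ℝ) :
    euclNorm x ≤ Real.sqrt (x ⬝ᵥ M.mulVec x) * (Real.sqrt (qfInf M))⁻¹ := by
  rcases eq_or_ne x 0 with rfl | hx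
  · have : euclNorm (0 : Fin n → ℝ) = 0 := by simp [euclNorm]
    rw [this]
    positivity
  · have hq1 : 1 ≤ qfInf M := one_le_qfInf hn M hMI
    have hq0 : 0 < qfInf M := by linarith
    set c : ℝ := euclNorm x with hc
    have hc0 : 0 < c := by
      rcases Function.ne_iff.mp hx with ⟨j, hj⟩
      have : 0 < ∑ i, (x i) ^ 2 :=
        Finset.sum_pos' (fun _ _ => sq_nonneg _) ⟨j, Finset.mem_univ j, lt_of_le_of_ne (sq_nonneg _) (Ne.symm (pow_ne_zero 2 hj))⟩
      exact Real.sqrt_pos.mpr this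
    set y : Fin n → ℝ := fun j => c⁻¹ * x j with hy
    have hy1 : euclNorm y = 1 := by
      rw [hy, euclNorm_smul, abs_of_pos (inv_pos.mpr hc0), ← hc, inv_mul_cancel₀ hc0.ne']
    have hyx : y ⬝ᵥ M.mulVec y = c⁻¹ ^ 2 * (x ⬝ᵥ M.mulVec x) := by
      have : y = c⁻¹ • x := rfl
      rw [this, Matrix.mulVec_smul, smul_dotProduct, dotProduct_smul]
      simp [smul_eq_mul]; ring
    have hmem : qfInf M ≤ y ⬝ᵥ M.mulVec y :=
      csInf_le (bddBelow_qf M hMI) ⟨y, hy1, rfl⟩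
    rw [hyx] at hmem
    have hq : qfInf M * c ^ 2 ≤ x ⬝ᵥ M.mulVec x := by
      have hc2 : (0:ℝ) < c ^ 2 := by positivity
      have := mul_le_mul_of_nonneg_right hmem hc2.le
      calc qfInf M * c ^ 2 ≤ c⁻¹ ^ 2 * (x ⬝ᵥ M.mulVec x) * c ^ 2 := this
        _ = x ⬝ᵥ M.mulVec x := by
            field_simp
    have hxMx0 : 0 ≤ x ⬝ᵥ M.mulVec x := le_trans (by positivity) hq
    have hcsq : c ^ 2 ≤ (x ⬝ᵥ M.mulVec x) / qfInf M := by
      rw [le_div_iff₀ hq0]; linarith [hq]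
    have : c ≤ Real.sqrt ((x ⬝ᵥ M.mulVec x) / qfInf M) := by
      rw [← Real.sqrt_sq hc0.le]
      exact Real.sqrt_le_sqrt hcsq
    calc c ≤ Real.sqrt ((x ⬝ᵥ M.mulVec x) / qfInf M) := this
      _ = Real.sqrt (x ⬝ᵥ M.mulVec x) * (Real.sqrt (qfInf M))⁻¹ := by
          rw [Real.sqrt_div hxMx0, div_eq_mul_inv]

end Stmt11Aux

/-- compounding of estimation errors, Lemma 3 of the paper:
if `A` and `B` share the same support contained columnwise in parent sets `Pa(i)` of size at
most `d`, each column of `B` has norm at most `1`, and for matrices `M_i ⪰ I`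
`‖[A − B]_i‖_{M_i} ≤ β`, then for every `ℓ ≥ 1` and every column `i`,
`‖[Aℓ − Bℓ]_i‖ < d^{(ℓ−1)/2}·(β+1)^ℓ·max_j λ_min(M_j)^{−1/2}`. -/
theorem stmt11 (N d : ℕ) (hN : 0 < N) (hd : 1 ≤ d)
    (B A : Matrix (Fin N) (Fin N) ℝ)
    (Pa : Fin N → Finset (Fin N)) (hPa : ∀ i, (Pa i).card ≤ d)
    (hsuppB : ∀ i j, B j i ≠ 0 → j ∈ Pa i)
    (hsuppA : ∀ i j, A j i ≠ 0 → j ∈ Pa i)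
    (hBcol : ∀ i, euclNorm (fun j => B j i) ≤ 1)
    (M : Fin N → Matrix (Fin N) (Fin N) ℝ)
    (hMsym : ∀ i, (M i).IsSymm) (hMI : ∀ i, (M i - 1).PosSemidef)
    (β : ℝ) (hβ : 0 ≤ β)
    (hΔ : ∀ i, Real.sqrt ((fun j => (A - B) j i) ⬝ᵥ (M i).mulVec (fun j => (A - B) j i)) ≤ β) :
    ∀ ℓ : ℕ, 1 ≤ ℓ → ∀ i,
      euclNorm (fun j => (A ^ ℓ - B ^ ℓ) j i) <
        (d : ℝ) ^ (((ℓ : ℝ) - 1) / 2) * (β + 1) ^ ℓ *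
          (⨆ j : Fin N, (qfInf (M j)) ^ (-(1 : ℝ) / 2)) := by
  classical
  intro ℓ hℓ i
  set Dr := Real.sqrt d with hDr
  have hDr1 : 1 ≤ Dr := Real.one_le_sqrt.mpr (by exact_mod_cast hd)
  have hDr0 : 0 < Dr := lt_of_lt_of_le one_pos hDr1
  set S := ⨆ j : Fin N, (qfInf (M j)) ^ (-(1:ℝ)/2) with hS
  have hq1 : ∀ j, 1 ≤ qfInf (M j) := fun j => Stmt11Aux.one_le_qfInf hN _ (hMI j)
  have hrpow : ∀ j, (qfInf (M j)) ^ (-(1:ℝ)/2) = (Real.sqrt (qfInf (M j)))⁻¹ := by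
    intro j
    rw [neg_div, Real.rpow_neg (by linarith [hq1 j]), Real.sqrt_eq_rpow]
  have hbdd : BddAbove (Set.range fun j : Fin N => (qfInf (M j)) ^ (-(1:ℝ)/2)) :=
    Set.Finite.bddAbove (Set.finite_range _)
  have hSle : ∀ j, (Real.sqrt (qfInf (M j)))⁻¹ ≤ S := fun j => by
    rw [← hrpow j]; exact le_ciSup hbdd j
  have hS0 : 0 < S := by
    have h1 : 0 < (Real.sqrt (qfInf (M ⟨0, hN⟩)))⁻¹ := by
      apply inv_pos.mpr; apply Real.sqrt_pos.mpr; linarith [hq1 (⟨0, hN⟩ : Fin N)]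
    exact lt_of_lt_of_le h1 (hSle _)
  have hΔcol : ∀ j, euclNorm (fun k => (A - B) k j) ≤ β * (Real.sqrt (qfInf (M j)))⁻¹ := by
    intro j
    have h := Stmt11Aux.euclNorm_le_qf hN (M j) (hMI j) (fun k => (A - B) k j)
    exact h.trans (mul_le_mul_of_nonneg_right (hΔ j) (inv_nonneg.mpr (Real.sqrt_nonneg _)))
  have hinv1 : ∀ j, (Real.sqrt (qfInf (M j)))⁻¹ ≤ 1 := by
    intro j
    exact inv_le_one_of_one_le₀ (Real.one_le_sqrt.mpr (hq1 j))
  have hΔS : ∀ j, euclNorm (fun k => (A - B) k j) ≤ β * S := fun j =>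
    (hΔcol j).trans (mul_le_mul_of_nonneg_left (hSle j) hβ)
  have hΔβ : ∀ j, euclNorm (fun k => (A - B) k j) ≤ β := by
    intro j
    refine (hΔcol j).trans ?_
    calc β * (Real.sqrt (qfInf (M j)))⁻¹ ≤ β * 1 := mul_le_mul_of_nonneg_left (hinv1 j) hβ
      _ = β := mul_one β
  have hAcol : ∀ j, euclNorm (fun k => A k j) ≤ β + 1 := by
    intro j
    have he : (fun k => A k j) = fun k => (A - B) k j + B k j := by
      funext k; simp [Matrix.sub_apply]
    rw [he]
    calc euclNorm (fun k => (A - B) k j + B k j)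
        ≤ euclNorm (fun k => (A - B) k j) + euclNorm (fun k => B k j) :=
          Stmt11Aux.euclNorm_add_le _ _
      _ ≤ β + 1 := add_le_add (hΔβ j) (hBcol j)
  have hsuppΔ : ∀ j k, (A - B) k j ≠ 0 → k ∈ Pa j := by
    intro j k h
    by_contra hk
    have hb : B k j = 0 := by by_contra hb; exact hk (hsuppB j k hb)
    have ha : A k j = 0 := by by_contra hb; exact hk (hsuppA j k hb)
    exact h (by simp [Matrix.sub_apply, ha, hb])
  have habs : ∀ (X : Matrix (Fin N) (Fin N) ℝ) j,
      ∑ k ∈ Pa j, |X k j| ≤ Dr * euclNorm (fun k => X k j) := by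
    intro X j
    refine (Stmt11Aux.sum_abs_le (Pa j) _).trans ?_
    refine mul_le_mul_of_nonneg_right ?_ (Stmt11Aux.euclNorm_nonneg _)
    rw [hDr]; exact Real.sqrt_le_sqrt (by exact_mod_cast hPa j)
  have hApow : ∀ m : ℕ, ∀ j, euclNorm (fun k => (A ^ (m+1)) k j) ≤ Dr ^ m * (β+1) ^ (m+1) := by
    intro m
    induction m with
    | zero => intro j; simpa using hAcol j
    | succ m ih =>
      intro j
      rw [show A ^ (m+2) = A ^ (m+1) * A from pow_succ A (m+1)]
      have h1 := Stmt11Aux.ecol_mul_le (A ^ (m+1)) A j (Pa j) (fun k hk => hsuppA j k hk)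
        (Dr ^ m * (β+1)^(m+1)) (by positivity) ih
      refine h1.trans ?_
      have h2 : ∑ k ∈ Pa j, |A k j| ≤ Dr * (β + 1) :=
        (habs A j).trans (mul_le_mul_of_nonneg_left (hAcol j) hDr0.le)
      calc (∑ k ∈ Pa j, |A k j|) * (Dr ^ m * (β+1)^(m+1))
          ≤ (Dr * (β+1)) * (Dr ^ m * (β+1)^(m+1)) :=
            mul_le_mul_of_nonneg_right h2 (by positivity)
        _ = Dr ^ (m+1) * (β+1) ^ (m+2) := by ring
  have hmain : ∀ m : ℕ, ∀ j,
      euclNorm (fun k => (A ^ (m+1) - B ^ (m+1)) k j) ≤ Dr ^ m * ((β+1) ^ (m+1) - 1) * S := by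
    intro m
    induction m with
    | zero =>
      intro j
      have h := hΔS j
      have hgoal : Dr ^ 0 * ((β+1) ^ (0+1) - 1) * S = β * S := by ring
      rw [hgoal]
      simpa using h
    | succ m ih =>
      intro j
      have heq : A ^ (m+2) - B ^ (m+2)
          = A ^ (m+1) * (A - B) + (A ^ (m+1) - B ^ (m+1)) * B := by
        rw [pow_succ A (m+1), pow_succ B (m+1)]; noncomm_ring
      have hsplit : (fun k => (A ^ (m+2) - B ^ (m+2)) k j)
          = fun k => (A ^ (m+1) * (A - B)) k j + ((A ^ (m+1) - B ^ (m+1)) * B) k j := by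
        funext k; rw [heq]; simp [Matrix.add_apply]
      rw [hsplit]
      have t1 : euclNorm (fun k => (A ^ (m+1) * (A - B)) k j)
          ≤ Dr * (β * S) * (Dr ^ m * (β+1)^(m+1)) := by
        have h1 := Stmt11Aux.ecol_mul_le (A ^ (m+1)) (A - B) j (Pa j) (hsuppΔ j)
          (Dr ^ m * (β+1)^(m+1)) (by positivity) (hApow m)
        refine h1.trans ?_
        have h2 : ∑ k ∈ Pa j, |(A - B) k j| ≤ Dr * (β * S) :=
          (habs (A - B) j).trans (mul_le_mul_of_nonneg_left (hΔS j) hDr0.le)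
        exact mul_le_mul_of_nonneg_right h2 (by positivity)
      have hcnn : 0 ≤ Dr ^ m * ((β+1)^(m+1) - 1) * S :=
        le_trans (Stmt11Aux.euclNorm_nonneg _) (ih j)
      have t2 : euclNorm (fun k => ((A ^ (m+1) - B ^ (m+1)) * B) k j)
          ≤ Dr * (Dr ^ m * ((β+1)^(m+1) - 1) * S) := by
        have h1 := Stmt11Aux.ecol_mul_le (A ^ (m+1) - B ^ (m+1)) B j (Pa j)
          (fun k hk => hsuppB j k hk) (Dr ^ m * ((β+1)^(m+1) - 1) * S) hcnn ih
        refine h1.trans ?_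
        have h2 : ∑ k ∈ Pa j, |B k j| ≤ Dr := by
          refine (habs B j).trans ?_
          calc Dr * euclNorm (fun k => B k j) ≤ Dr * 1 :=
                mul_le_mul_of_nonneg_left (hBcol j) hDr0.le
            _ = Dr := mul_one Dr
        exact mul_le_mul_of_nonneg_right h2 hcnn
      calc euclNorm (fun k => (A ^ (m+1) * (A - B)) k j + ((A ^ (m+1) - B ^ (m+1)) * B) k j)
          ≤ euclNorm (fun k => (A ^ (m+1) * (A - B)) k j)
            + euclNorm (fun k => ((A ^ (m+1) - B ^ (m+1)) * B) k j) :=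
            Stmt11Aux.euclNorm_add_le _ _
        _ ≤ Dr * (β * S) * (Dr ^ m * (β+1)^(m+1))
            + Dr * (Dr ^ m * ((β+1)^(m+1) - 1) * S) := add_le_add t1 t2
        _ = Dr ^ (m+1) * ((β+1) ^ (m+2) - 1) * S := by ring
  obtain ⟨m, rfl⟩ : ∃ m, ℓ = m + 1 := ⟨ℓ - 1, (Nat.succ_pred_eq_of_pos hℓ).symm⟩
  have hexp : (d : ℝ) ^ ((((m+1 : ℕ) : ℝ) - 1) / 2) = Dr ^ m := by
    have h1 : (((m+1 : ℕ) : ℝ) - 1) / 2 = (1/2 : ℝ) * (m : ℕ) := by push_cast; ring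
    rw [h1, Real.rpow_mul (Nat.cast_nonneg d), Real.rpow_natCast, hDr, Real.sqrt_eq_rpow]
  rw [hexp]
  calc euclNorm (fun j => (A ^ (m+1) - B ^ (m+1)) j i)
      ≤ Dr ^ m * ((β+1) ^ (m+1) - 1) * S := hmain m i
    _ < Dr ^ m * (β+1) ^ (m+1) * S := by
        apply mul_lt_mul_of_pos_right _ hS0
        apply mul_lt_mul_of_pos_left _ (pow_pos hDr0 m)
        linarith
    _ = Dr ^ m * (β + 1) ^ (m+1) * S := rfl
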